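/- Let A₀' = (E₃+F₃)/2 be the midpoint of E₃F₃, D₀ = (B+C)/2 the midpoint of BC, and A₃ = T_P(D₃). Then the four lines A₀'P', D₀Q, D₃Q', and A₃P are concurrent at the point λ(A) = T_{P'}(T_P⁻¹(A)): that is, the point Z₀' := T_{P'}(T_P⁻¹(A)) is collinear with each of the pairs (A₀', P'), (D₀, Q), (D₃, Q'), and (A₃, P). -/

import Mathlib

noncomputable section

abbrev Pt := EuclideanSpace ℝ (Fin 2)

lemma affine_comb (f : Pt ≃ᵃ[ℝ] Pt) (A B C : Pt) (y z : ℝ) :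
    f (A + (y • (B - A) + z • (C - A))) = f A + (y • (f B - f A) + z • (f C - f A)) := by
  have hlin : ∀ p q : Pt, (f : Pt →ᵃ[ℝ] Pt).linear (p - q) = f p - f q := by
    intro p q
    simpa [vsub_eq_sub] using (f : Pt →ᵃ[ℝ] Pt).linearMap_vsub p q
  have h := (f : Pt →ᵃ[ℝ] Pt).map_vadd A (y • (B - A) + z • (C - A))
  simp only [vadd_eq_add, map_add, map_smul, AffineEquiv.coe_coe] at h
  rw [hlin, hlin] at h
  rw [add_comm A, h]
  abel

lemma col3 (Z X1 X2 : Pt) (c : ℝ) (h : Z = X1 + c • (X2 - X1)) :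
    Collinear ℝ ({Z, X1, X2} : Set Pt) := by
  rw [collinear_iff_of_mem (Set.mem_insert_of_mem _ (Set.mem_insert _ _))]
  refine ⟨X2 - X1, fun p hp => ?_⟩
  simp only [Set.mem_insert_iff, Set.mem_singleton_iff] at hp
  rcases hp with rfl | rfl | rfl
  · exact ⟨c, by rw [h, vadd_eq_add]; abel⟩
  · exact ⟨0, by simp⟩
  · exact ⟨1, by rw [vadd_eq_add, one_smul]; abel⟩

set_option maxHeartbeats 2000000

theorem stmt15
    (A B C : Pt) (hABC : AffineIndependent ℝ ![A, B, C])
    (α β γ : ℝ) (hsum : α + β + γ = 1)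
    (hα : α ≠ 0) (hβ : β ≠ 0) (hγ : γ ≠ 0)
    (hβγ : β + γ ≠ 0) (hγα : γ + α ≠ 0) (hαβ : α + β ≠ 0)
    (hab : α ≠ β) (hbc : β ≠ γ) (hca : γ ≠ α)
    (hs : α * β + β * γ + γ * α ≠ 0)
    (G : Pt) (hG : G = (3:ℝ)⁻¹ • (A + B + C))
    (P : Pt) (hP : P = α • A + β • B + γ • C)
    (P' : Pt)
    (hP'' : P' = (α * β + β * γ + γ * α)⁻¹ • ((β * γ) • A + (γ * α) • B + (α * β) • C))
    (Q : Pt) (hQ : Q = G - (2:ℝ)⁻¹ • (P' - G))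
    (Q' : Pt) (hQ' : Q' = G - (2:ℝ)⁻¹ • (P - G))
    (D E F : Pt)
    (hD : D = (β + γ)⁻¹ • (β • B + γ • C))
    (hE : E = (γ + α)⁻¹ • (α • A + γ • C))
    (hF : F = (α + β)⁻¹ • (α • A + β • B))
    (D₃ E₃ F₃ : Pt)
    (hD₃ : D₃ = (β + γ)⁻¹ • (γ • B + β • C))
    (hE₃ : E₃ = (γ + α)⁻¹ • (γ • A + α • C))
    (hF₃ : F₃ = (α + β)⁻¹ • (β • A + α • B))
    (TP : Pt ≃ᵃ[ℝ] Pt) (hTPA : TP A = D) (hTPB : TP B = E) (hTPC : TP C = F)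
    (TP' : Pt ≃ᵃ[ℝ] Pt) (hTP'A : TP' A = D₃) (hTP'B : TP' B = E₃) (hTP'C : TP' C = F₃)

    (A₀' : Pt) (hA₀' : A₀' = midpoint ℝ E₃ F₃)
    (D₀ : Pt) (hD₀ : D₀ = midpoint ℝ B C)
    (A₃ : Pt) (hA₃ : A₃ = TP D₃) :
    Collinear ℝ ({TP' (TP.symm A), A₀', P'} : Set Pt) ∧
    Collinear ℝ ({TP' (TP.symm A), D₀, Q} : Set Pt) ∧
    Collinear ℝ ({TP' (TP.symm A), D₃, Q'} : Set Pt) ∧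
    Collinear ℝ ({TP' (TP.symm A), A₃, P} : Set Pt) := by
  have hγ1 : γ = 1 - α - β := by linarith
  subst hγ1
  subst hG hP hP'' hQ hQ' hD hE hF hD₃ hE₃ hF₃ hA₀' hD₀ hA₃
  have h1a : (1:ℝ) - α ≠ 0 := fun h => hβγ (by linarith)
  have h1b : (1:ℝ) - β ≠ 0 := fun h => hγα (by linarith)
  have hMid : ∀ x y : Pt, midpoint ℝ x y = (2:ℝ)⁻¹ • (x + y) := fun x y => by
    rw [midpoint_eq_smul_add, invOf_eq_inv]
  have hXeq : TP (A + (((1 - α - β + α) / (2 * α)) • (B - A)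
      + ((α + β) / (2 * α)) • (C - A))) = A := by
    rw [affine_comb, hTPA, hTPB, hTPC]
    match_scalars <;> field_simp <;> ring
  have hX : TP.symm A = A + (((1 - α - β + α) / (2 * α)) • (B - A)
      + ((α + β) / (2 * α)) • (C - A)) :=
    TP.symm_apply_eq.2 hXeq.symm
  have hZ : TP' (TP.symm A) = TP' A + (((1 - α - β + α) / (2 * α)) • (TP' B - TP' A)
      + ((α + β) / (2 * α)) • (TP' C - TP' A)) := by
    rw [hX]; exact affine_comb TP' A B C _ _
  rw [hTP'A, hTP'B, hTP'C] at hZ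
  have hA3 : TP ((β + (1 - α - β))⁻¹ • ((1 - α - β) • B + β • C))
      = TP B + ((β / (β + (1 - α - β))) • (TP C - TP B) + (0:ℝ) • (TP C - TP B)) := by
    rw [show (β + (1 - α - β))⁻¹ • ((1 - α - β) • B + β • C)
        = B + ((β / (β + (1 - α - β))) • (C - B) + (0:ℝ) • (C - B)) by
      match_scalars <;> field_simp <;> ring]
    exact affine_comb TP B C C _ _
  rw [hTPB, hTPC] at hA3
  rw [hZ, hA3, hMid, hMid]
  have hs' : β * (α + (1 - α - β)) + α * (1 - α - β) ≠ 0 := fun h => hs (by linear_combination h)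
  refine ⟨col3 _ _ _ (-(α * β + β * (1-α-β) + (1-α-β) * α) / α ^ 2) ?_,
          col3 _ _ _ ((α * β + β * (1-α-β) + (1-α-β) * α) / α ^ 2) ?_,
          col3 _ _ _ (1 / α) ?_,
          col3 _ _ _ (((α - (1-α-β)) * (β + (1-α-β)) * (α + β) - 2*α*β^2)
            / (2 * α^2 * β * (1-α-β))) ?_⟩ <;>
    match_scalars <;>
    field_simp <;>
    ring
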